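/- Cancellation identity for weighted path sums under an invariant measure (the identity underlying the divergence-free property of the corrected flow): let z₁, …, z_κ be an enumeration of S and let Q₁, …, Q_{κ−1} be arbitrary real numbers. For 1 ≤ i ≤ κ set B(i) = Σ_{j : j > i} r(z_i, z_j) · Σ_{u=i}^{j−1} Q_u − Σ_{j : j < i} r(z_i, z_j) · Σ_{u=j}^{i−1} Q_u. Then Σ_{i=1}^{κ} m(z_i) · B(i) = 0. -/
import Mathlib


open Finset

/-- Flow balance across a cut: if each vertex has equal in/out flow, the total
flow from `A` to `Aᶜ` equals the flow from `Aᶜ` to `A` (stated with swapped args). -/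
lemma aux_balance_stmt19 {α : Type*} [Fintype α] [DecidableEq α] (g : α → α → ℝ)
    (h : ∀ i, ∑ j, g i j = ∑ j, g j i) (A : Finset α) :
    ∑ i ∈ A, ∑ j ∈ Aᶜ, g i j = ∑ i ∈ A, ∑ j ∈ Aᶜ, g j i := by
  have h1 : ∑ i ∈ A, ∑ j, g i j = ∑ i ∈ A, ∑ j, g j i :=
    Finset.sum_congr rfl fun i _ => h i
  have h2 : ∀ G : α → α → ℝ, ∑ i ∈ A, ∑ j, G i j
      = ∑ i ∈ A, ∑ j ∈ A, G i j + ∑ i ∈ A, ∑ j ∈ Aᶜ, G i j := by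
    intro G
    rw [← Finset.sum_add_distrib]
    exact Finset.sum_congr rfl fun i _ => (Finset.sum_add_sum_compl A _).symm
  have h3 : ∑ i ∈ A, ∑ j ∈ A, g i j = ∑ i ∈ A, ∑ j ∈ A, g j i := Finset.sum_comm
  rw [h2, h2, h3] at h1
  linarith

theorem stmt_19 {S : Type*} [Fintype S]
    (r : S → S → ℝ) (hr : ∀ x y, 0 ≤ r x y)
    (m : S → ℝ) (hm : ∀ x, 0 < m x)
    (hinv : ∀ x, ∑ y, m x * r x y = ∑ y, m y * r y x)
    (κ : ℕ) (hκ : κ = Fintype.card S)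
    (z : Fin κ → S) (hz : Function.Bijective z)
    (Q : ℕ → ℝ)
    (B : Fin κ → ℝ)
    (hB : ∀ i, B i =
      (∑ j : Fin κ, if i < j then
        r (z i) (z j) * ∑ u ∈ Finset.Ico (i : ℕ) (j : ℕ), Q u else 0) -
      (∑ j : Fin κ, if j < i then
        r (z i) (z j) * ∑ u ∈ Finset.Ico (j : ℕ) (i : ℕ), Q u else 0)) :
    ∑ i, m (z i) * B i = 0 := by
  classical
  set g : Fin κ → Fin κ → ℝ := fun i j => m (z i) * r (z i) (z j) with hg
  -- transported invariance
  have hginv : ∀ i, ∑ j, g i j = ∑ j, g j i := by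
    intro i
    have e1 : ∑ j, g i j = ∑ y, m (z i) * r (z i) y :=
      Fintype.sum_bijective z hz _ _ (fun j => rfl)
    have e2 : ∑ j, g j i = ∑ y, m y * r y (z i) :=
      Fintype.sum_bijective z hz _ _ (fun j => rfl)
    rw [e1, e2]; exact hinv (z i)
  set G : Fin κ → Fin κ → ℝ := fun i j => g i j - g j i with hG
  have hGinv : ∀ i, ∑ j, G i j = ∑ j, G j i := by
    intro i
    simp only [hG]
    rw [Finset.sum_sub_distrib, Finset.sum_sub_distrib, hginv i]
  -- key : for each u the cut sum vanishes
  have key : ∀ u : ℕ, ∑ i : Fin κ, ∑ j : Fin κ,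
      (if (i : ℕ) ≤ u ∧ u < (j : ℕ) then G i j else 0) = 0 := by
    intro u
    set A : Finset (Fin κ) := univ.filter (fun i => (i : ℕ) ≤ u) with hA
    have hcut : ∑ i : Fin κ, ∑ j : Fin κ,
        (if (i : ℕ) ≤ u ∧ u < (j : ℕ) then G i j else 0)
        = ∑ i ∈ A, ∑ j ∈ Aᶜ, G i j := by
      simp only [hA, Finset.compl_filter, not_le, Finset.sum_filter]
      refine Finset.sum_congr rfl fun i _ => ?_
      split_ifs with h
      · exact Finset.sum_congr rfl fun j _ => by simp [h]
      · apply Finset.sum_eq_zero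
        intro j _
        rw [if_neg]
        exact fun hc => h hc.1
    have hbal := aux_balance_stmt19 G hGinv A
    have hneg : ∑ i ∈ A, ∑ j ∈ Aᶜ, G j i = -∑ i ∈ A, ∑ j ∈ Aᶜ, G i j := by
      rw [← Finset.sum_neg_distrib]
      refine Finset.sum_congr rfl fun i _ => ?_
      rw [← Finset.sum_neg_distrib]
      refine Finset.sum_congr rfl fun j _ => ?_
      simp [hG]
    rw [hneg] at hbal
    rw [hcut]; linarith
  -- step 1 : antisymmetrize
  have step1 : ∑ i, m (z i) * B i = ∑ i : Fin κ, ∑ j : Fin κ,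
      (if i < j then G i j * (∑ u ∈ Finset.Ico (i : ℕ) (j : ℕ), Q u) else 0) := by
    have expand : ∀ i, m (z i) * B i =
        (∑ j : Fin κ, if i < j then g i j * (∑ u ∈ Finset.Ico (i:ℕ) (j:ℕ), Q u) else 0)
        - (∑ j : Fin κ, if j < i then g i j * (∑ u ∈ Finset.Ico (j:ℕ) (i:ℕ), Q u) else 0) := by
      intro i
      rw [hB i, mul_sub, Finset.mul_sum, Finset.mul_sum]
      congr 1 <;> exact Finset.sum_congr rfl fun j _ => by
        split_ifs <;> simp [hg, mul_assoc]
    calc ∑ i, m (z i) * B i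
        = (∑ i : Fin κ, ∑ j : Fin κ, if i < j then g i j * (∑ u ∈ Finset.Ico (i:ℕ) (j:ℕ), Q u) else 0)
          - (∑ i : Fin κ, ∑ j : Fin κ, if j < i then g i j * (∑ u ∈ Finset.Ico (j:ℕ) (i:ℕ), Q u) else 0) := by
          rw [← Finset.sum_sub_distrib]
          exact Finset.sum_congr rfl fun i _ => expand i
      _ = (∑ i : Fin κ, ∑ j : Fin κ, if i < j then g i j * (∑ u ∈ Finset.Ico (i:ℕ) (j:ℕ), Q u) else 0)
          - (∑ i : Fin κ, ∑ j : Fin κ, if i < j then g j i * (∑ u ∈ Finset.Ico (i:ℕ) (j:ℕ), Q u) else 0) := by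
          rw [Finset.sum_comm (s := univ) (t := univ)
            (f := fun i j => if j < i then g i j * (∑ u ∈ Finset.Ico (j:ℕ) (i:ℕ), Q u) else 0)]
      _ = ∑ i : Fin κ, ∑ j : Fin κ,
          (if i < j then G i j * (∑ u ∈ Finset.Ico (i:ℕ) (j:ℕ), Q u) else 0) := by
          rw [← Finset.sum_sub_distrib]
          refine Finset.sum_congr rfl fun i _ => ?_
          rw [← Finset.sum_sub_distrib]
          refine Finset.sum_congr rfl fun j _ => ?_
          split_ifs <;> simp [hG, sub_mul]
  -- step 2 : expand the Ico sums over range κ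
  have step2 : ∀ (i j : Fin κ),
      (if i < j then G i j * (∑ u ∈ Finset.Ico (i:ℕ) (j:ℕ), Q u) else 0)
      = ∑ u ∈ Finset.range κ, (if (i:ℕ) ≤ u ∧ u < (j:ℕ) then G i j * Q u else 0) := by
    intro i j
    split_ifs with h
    · rw [Finset.mul_sum, ← Finset.sum_filter]
      apply Finset.sum_congr _ (fun u _ => rfl)
      ext u
      simp only [Finset.mem_Ico, Finset.mem_filter, Finset.mem_range]
      exact ⟨fun hu => ⟨lt_of_lt_of_le hu.2 (le_of_lt j.isLt), hu⟩, fun hu => hu.2⟩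
    · symm
      apply Finset.sum_eq_zero
      intro u _
      rw [if_neg]
      rintro ⟨h1, h2⟩
      exact h (Fin.lt_def.mpr (lt_of_le_of_lt h1 h2))
  rw [step1]
  calc ∑ i : Fin κ, ∑ j : Fin κ,
      (if i < j then G i j * (∑ u ∈ Finset.Ico (i:ℕ) (j:ℕ), Q u) else 0)
      = ∑ i : Fin κ, ∑ j : Fin κ, ∑ u ∈ Finset.range κ,
          (if (i:ℕ) ≤ u ∧ u < (j:ℕ) then G i j * Q u else 0) := by
        exact Finset.sum_congr rfl fun i _ => Finset.sum_congr rfl fun j _ => step2 i j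
    _ = ∑ u ∈ Finset.range κ, ∑ i : Fin κ, ∑ j : Fin κ,
          (if (i:ℕ) ≤ u ∧ u < (j:ℕ) then G i j * Q u else 0) := by
        trans ∑ i : Fin κ, ∑ u ∈ Finset.range κ, ∑ j : Fin κ,
          (if (i:ℕ) ≤ u ∧ u < (j:ℕ) then G i j * Q u else 0)
        · exact Finset.sum_congr rfl fun i _ => Finset.sum_comm
        · exact Finset.sum_comm
    _ = 0 := by
        apply Finset.sum_eq_zero
        intro u _
        have factor : ∑ i : Fin κ, ∑ j : Fin κ,
            (if (i:ℕ) ≤ u ∧ u < (j:ℕ) then G i j * Q u else 0)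
            = (∑ i : Fin κ, ∑ j : Fin κ,
              (if (i:ℕ) ≤ u ∧ u < (j:ℕ) then G i j else 0)) * Q u := by
          rw [Finset.sum_mul]
          refine Finset.sum_congr rfl fun i _ => ?_
          rw [Finset.sum_mul]
          refine Finset.sum_congr rfl fun j _ => ?_
          split_ifs <;> simp
        rw [factor, key u, zero_mul]
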